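/- Let X and Y be compact metric spaces, R ⊆ X³ and S ⊆ Y³ closed subsets. Let X̃ = I_d(X,X) with isolated points ã_n and Ỹ = I_e(Y,Y) with isolated points b̃_n (for admissible sequences d, e), and set B_n = {ã_n} × X̃², C_n = X̃ × {ã_n} × X̃, D_n = X̃² × {ã_n}, and H_m = {b̃_m} × Ỹ², I_m = Ỹ × {b̃_m} × Ỹ, J_m = Ỹ² × {b̃_m}. Identify R with its copy in X̃³ (via x ↦ (x,0) in each coordinate), and likewise S in Ỹ³. Then the following are equivalent: (i) there is a homeomorphism f : X → Y with (f×f×f)(R) = S; (ii) there exist a homeomorphism h : X̃³ → Ỹ³ and a permutation τ of the positive integers such that h(R) = S and, for all n, h(B_n) = H_{τ(n)}, h(C_n) = I_{τ(n)}, h(D_n) = J_{τ(n)}. -/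

import Mathlib

open Set Topology

/-- The space `I_d(X,A) ⊆ X × [0,1]`: the copy `X × {0}` of `X` together with the isolated
points `ã_n = (d_n, 1/n)` (here indexed by `n : ℕ`, with `ã_n = (d n, 1/(n+1))`). -/
def Itilde {X : Type*} [TopologicalSpace X] (d : ℕ → X) : Set (X × ℝ) :=
  (Set.univ ×ˢ {(0 : ℝ)}) ∪ Set.range (fun n : ℕ => (d n, 1 / (n + 1 : ℝ)))

/-- A sequence `d` is admissible for `A` if it takes values in `A`, has dense range in `A`,
and attains each of its values at infinitely many indices. -/
def Admissible {X : Type*} [TopologicalSpace X] (A : Set X) (d : ℕ → X) : Prop :=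
  (∀ n, d n ∈ A) ∧ A ⊆ closure (Set.range d) ∧ ∀ n, {m : ℕ | d m = d n}.Infinite

/-- The isolated point `ã_n ∈ I_d(X,A)`. -/
noncomputable def atilde {X : Type*} [TopologicalSpace X] (d : ℕ → X) (n : ℕ) : ↥(Itilde d) :=
  ⟨(d n, 1 / (n + 1 : ℝ)), Or.inr ⟨n, rfl⟩⟩

/-- The canonical copy of `X` inside `I_d(X,A)`, `x ↦ (x,0)`. -/
def embI {X : Type*} [TopologicalSpace X] (d : ℕ → X) (x : X) : ↥(Itilde d) :=
  ⟨(x, 0), Or.inl (Set.mk_mem_prod (Set.mem_univ x) rfl)⟩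

open Filter Function

section Basic
variable {X : Type*} [MetricSpace X] {d : ℕ → X}

lemma inv_succ_pos (n : ℕ) : (0:ℝ) < 1 / (n + 1) := by positivity

lemma inv_succ_ne_zero (n : ℕ) : (1 : ℝ) / (n + 1) ≠ 0 := (inv_succ_pos n).ne'

lemma inv_succ_inj {m n : ℕ} (h : (1:ℝ)/(m+1) = 1/(n+1)) : m = n := by
  have hm : (0:ℝ) < m + 1 := by positivity
  have hn : (0:ℝ) < n + 1 := by positivity
  field_simp at h
  exact_mod_cast (by linarith : (m:ℝ) = n)

lemma inv_succ_close {m n : ℕ} (h : |(1:ℝ)/(m+1) - 1/(n+1)| < 1/((n+1)*(n+2))) : m = n := by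
  by_contra hne
  have hm : (0:ℝ) < m + 1 := by positivity
  have hn : (0:ℝ) < n + 1 := by positivity
  have hn2 : (0:ℝ) < n + 2 := by positivity
  rcases lt_or_gt_of_ne hne with hlt | hgt
  · -- m < n, so 1/(m+1) - 1/(n+1) ≥ 1/n - 1/(n+1) ≥ 1/((n+1)(n+2))
    have h1 : (m:ℝ) + 1 ≤ n := by exact_mod_cast hlt
    have habs := (abs_lt.mp h).2
    have key : (1:ℝ)/((n+1)*(n+2)) ≤ 1/(m+1) - 1/(n+1) := by
      rw [div_sub_div _ _ hm.ne' hn.ne', div_le_div_iff₀ (by positivity) (by positivity)]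
      have q1 : (0:ℝ) ≤ (n+1)*(n+1)*((n+1)-(m+1)-1) :=
        mul_nonneg (mul_nonneg hn.le hn.le) (by linarith)
      have q2 : (0:ℝ) ≤ (n+1)*((n+1)-(m+1)) := mul_nonneg hn.le (by linarith)
      nlinarith [q1, q2]
    linarith
  · have h1 : (n:ℝ) + 2 ≤ m + 1 := by
      have : n + 1 ≤ m := hgt
      exact_mod_cast by linarith [this]
    have habs := (abs_lt.mp h).1
    have key : (1:ℝ)/((n+1)*(n+2)) ≤ 1/(n+1) - 1/(m+1) := by
      rw [div_sub_div _ _ hn.ne' hm.ne', div_le_div_iff₀ (by positivity) (by positivity)]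
      have q1 : (0:ℝ) ≤ (n+1)*(n+1)*((m+1)-(n+1)-1) :=
        mul_nonneg (mul_nonneg hn.le hn.le) (by linarith)
      nlinarith [q1]
    linarith

lemma mem_Itilde_iff {p : X × ℝ} : p ∈ Itilde d ↔ p.2 = 0 ∨ ∃ n, p = (d n, 1/(n+1:ℝ)) := by
  constructor
  · rintro (hp | ⟨n, hn⟩)
    · exact Or.inl hp.2
    · exact Or.inr ⟨n, hn.symm⟩
  · rintro (hp | ⟨n, rfl⟩)
    · exact Or.inl ⟨mem_univ _, hp⟩
    · exact Or.inr ⟨n, rfl⟩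

lemma embI_injective : Function.Injective (embI d) := by
  intro x y hxy
  exact congrArg (fun p : ↥(Itilde d) => (p : X × ℝ).1) hxy

/-- Any point of `Itilde` close to `ã_n` equals `ã_n`. -/
lemma eq_atilde_of_close {q : ↥(Itilde d)} {n : ℕ}
    (h : dist q (atilde d n) < 1/((n+1)*(n+2))) : q = atilde d n := by
  have h2 : |(q : X × ℝ).2 - 1/(n+1)| < 1/((n+1)*(n+2)) := by
    rw [Subtype.dist_eq, Prod.dist_eq] at h
    calc |(q : X × ℝ).2 - 1/(n+1)| = dist (q : X × ℝ).2 (atilde d n : X × ℝ).2 := by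
          rw [Real.dist_eq]; rfl
      _ ≤ _ := le_max_right _ _
      _ < _ := h
  rcases mem_Itilde_iff.mp q.2 with hq | ⟨m, hm⟩
  · rw [hq] at h2
    have : (1:ℝ)/((n+1)*(n+2)) ≤ 1/(n+1) := by
      apply one_div_le_one_div_of_le (by positivity); nlinarith [Nat.cast_nonneg (α := ℝ) n]
    rw [abs_sub_comm, sub_zero, abs_of_nonneg (by positivity)] at h2
    linarith
  · have h2' : |(1:ℝ)/(m+1) - 1/(n+1)| < 1/((n+1)*(n+2)) := by
      rw [hm] at h2; exact h2
    have : m = n := inv_succ_close h2'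
    subst this
    exact Subtype.ext hm

lemma isolated_atilde (n : ℕ) : IsOpen ({atilde d n} : Set ↥(Itilde d)) := by
  have : ({atilde d n} : Set ↥(Itilde d)) = Metric.ball (atilde d n) (1/((n+1)*(n+2))) := by
    ext q
    simp only [mem_singleton_iff, Metric.mem_ball]
    exact ⟨fun h => by rw [h, dist_self]; positivity, fun h => eq_atilde_of_close h⟩
  rw [this]; exact Metric.isOpen_ball

lemma continuousAt_atilde {Z : Type*} [TopologicalSpace Z] (g : ↥(Itilde d) → Z) (n : ℕ) :
    ContinuousAt g (atilde d n) := by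
  have h := (isOpen_singleton_iff_nhds_eq_pure (atilde d n)).mp (isolated_atilde n)
  rw [ContinuousAt, h]
  exact tendsto_pure_nhds g _

lemma cases_Itilde (p : ↥(Itilde d)) : (∃ x, p = embI d x) ∨ ∃ n, p = atilde d n := by
  rcases mem_Itilde_iff.mp p.2 with hp | ⟨n, hn⟩
  · exact Or.inl ⟨(p : X × ℝ).1, Subtype.ext (Prod.ext rfl hp)⟩
  · exact Or.inr ⟨n, Subtype.ext hn⟩

lemma continuous_embI : Continuous (embI d) := by
  apply Continuous.subtype_mk
  exact continuous_id.prodMk continuous_const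

lemma exists_approach (hd : Admissible Set.univ d) (x : X) :
    ∃ n : ℕ → ℕ, (∀ k, k < n k) ∧ ∀ k, dist (d (n k)) x < 1/(k+1) := by
  have hx : x ∈ closure (Set.range d) := hd.2.1 (mem_univ x)
  have key : ∀ k : ℕ, ∃ j, k < j ∧ dist (d j) x < 1/(k+1) := by
    intro k
    obtain ⟨b, ⟨m, rfl⟩, hb⟩ := Metric.mem_closure_iff.mp hx (1/(k+1)) (inv_succ_pos k)
    obtain ⟨j, hj, hjk⟩ := (hd.2.2 m).exists_gt k
    exact ⟨j, hjk, by rw [hj, dist_comm]; exact hb⟩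
  choose n hn1 hn2 using key
  exact ⟨n, hn1, hn2⟩

lemma tendsto_inv_succ_comp {u : ℕ → ℕ} (hu : Tendsto u atTop atTop) :
    Tendsto (fun k => (1:ℝ)/(u k + 1)) atTop (𝓝 0) :=
  tendsto_one_div_add_atTop_nhds_zero_nat.comp hu

lemma injective_tendsto_atTop {u : ℕ → ℕ} (hu : Function.Injective u) :
    Tendsto u atTop atTop := by
  rw [← Nat.cofinite_eq_atTop]
  exact hu.tendsto_cofinite

lemma tendsto_atilde_of_approach (x : X) {n : ℕ → ℕ} (h1 : ∀ k, k < n k)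
    (h2 : ∀ k, dist (d (n k)) x < 1/(k+1)) :
    Tendsto (fun k => atilde d (n k)) atTop (𝓝 (embI d x)) := by
  rw [tendsto_subtype_rng]
  apply Filter.Tendsto.prodMk_nhds
  · rw [Metric.tendsto_atTop]
    intro ε hε
    obtain ⟨N, hN⟩ := exists_nat_one_div_lt hε
    refine ⟨N, fun k hk => ?_⟩
    have hle : (1:ℝ)/(k+1) ≤ 1/(N+1) := by
      apply one_div_le_one_div_of_le (by positivity)
      push_cast
      linarith [(Nat.cast_le (α := ℝ)).mpr hk]
    calc dist (d (n k)) x < 1/(k+1) := h2 k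
      _ ≤ 1/(N+1) := hle
      _ < ε := hN
  · apply squeeze_zero (fun k => (inv_succ_pos (n k)).le) (fun k => ?_)
      tendsto_one_div_add_atTop_nhds_zero_nat
    apply one_div_le_one_div_of_le (by positivity)
    have := (h1 k).le
    push_cast
    linarith [(Nat.cast_le (α := ℝ)).mpr this]

end Basic

section Glue
variable {X Y : Type*} [MetricSpace X] [MetricSpace Y]

lemma exists_index {d : ℕ → X} (p : ↥(Itilde d)) (h : (p : X × ℝ).2 ≠ 0) :
    ∃ n, (p : X × ℝ) = (d n, 1/(n+1:ℝ)) :=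
  (mem_Itilde_iff.mp p.2).resolve_left h

noncomputable def glue (d : ℕ → X) (e : ℕ → Y) (f : X → Y) (τ : ℕ → ℕ)
    (p : ↥(Itilde d)) : ↥(Itilde e) :=
  if h : (p : X × ℝ).2 = 0 then embI e (f (p : X × ℝ).1)
  else atilde e (τ (Classical.choose (exists_index p h)))

lemma glue_embI (d : ℕ → X) (e : ℕ → Y) (f : X → Y) (τ : ℕ → ℕ) (x : X) :
    glue d e f τ (embI d x) = embI e (f x) := dif_pos rfl

lemma glue_atilde (d : ℕ → X) (e : ℕ → Y) (f : X → Y) (τ : ℕ → ℕ) (n : ℕ) :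
    glue d e f τ (atilde d n) = atilde e (τ n) := by
  have hne : ((atilde d n : ↥(Itilde d)) : X × ℝ).2 ≠ 0 := inv_succ_ne_zero n
  rw [glue, dif_neg hne]
  have hspec := Classical.choose_spec (exists_index (atilde d n) hne)
  have h2 := congrArg Prod.snd hspec
  have : Classical.choose (exists_index (atilde d n) hne) = n :=
    (inv_succ_inj h2.symm)
  rw [this]

lemma glue_continuous (d : ℕ → X) (e : ℕ → Y) (f : X → Y) (hf : UniformContinuous f)
    (τ : ℕ → ℕ) (hτ : Function.Injective τ)
    (hc : Tendsto (fun n => dist (e (τ n)) (f (d n))) atTop (𝓝 0)) :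
    Continuous (glue d e f τ) := by
  rw [continuous_iff_continuousAt]
  intro p
  rcases cases_Itilde p with ⟨x, rfl⟩ | ⟨n, rfl⟩
  swap
  · exact continuousAt_atilde _ n
  rw [Metric.continuousAt_iff]
  intro ε hε
  obtain ⟨δ₁, hδ₁pos, hδ₁⟩ := Metric.uniformContinuous_iff.mp hf (ε/2) (half_pos hε)
  have hinf : Tendsto (fun m => (1:ℝ)/(τ m + 1)) atTop (𝓝 0) :=
    tendsto_inv_succ_comp (injective_tendsto_atTop hτ)
  obtain ⟨N₁, hN₁⟩ := (Metric.tendsto_atTop.mp hc) (ε/2) (half_pos hε)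
  obtain ⟨N₂, hN₂⟩ := (Metric.tendsto_atTop.mp hinf) ε hε
  set N := max N₁ N₂ with hN
  refine ⟨min δ₁ (1/(N+1)), lt_min hδ₁pos (inv_succ_pos N), ?_⟩
  intro q hq
  rw [Subtype.dist_eq, Prod.dist_eq] at hq
  rcases cases_Itilde q with ⟨x', rfl⟩ | ⟨m, rfl⟩
  · rw [glue_embI, glue_embI, Subtype.dist_eq, Prod.dist_eq]
    have h1 : dist x' x < δ₁ := by
      calc dist x' x ≤ _ := le_max_left _ (dist (0:ℝ) 0)
        _ < min δ₁ (1/(N+1)) := hq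
        _ ≤ δ₁ := min_le_left _ _
    have h2 := hδ₁ h1
    show dist (f x') (f x) ⊔ dist (0:ℝ) (0:ℝ) < ε
    rw [dist_self]
    calc max (dist (f x') (f x)) 0 = dist (f x') (f x) := max_eq_left dist_nonneg
      _ < ε/2 := h2
      _ < ε := by linarith
  · rw [glue_atilde, glue_embI, Subtype.dist_eq, Prod.dist_eq]
    have hq' : (dist (d m) x) ⊔ (dist ((1:ℝ)/(m+1)) (0:ℝ)) < min δ₁ (1/(N+1)) := hq
    have hd1 : dist (d m) x < min δ₁ (1/(N+1)) :=
      lt_of_le_of_lt (le_max_left _ _) hq'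
    have hd2 : (1:ℝ)/(m+1) < min δ₁ (1/(N+1)) := by
      have := lt_of_le_of_lt (le_max_right (dist (d m) x) _) hq'
      rwa [Real.dist_eq, sub_zero, abs_of_nonneg (inv_succ_pos m).le] at this
    have hmN : N ≤ m := by
      have h3 : (1:ℝ)/(m+1) < 1/(N+1) := lt_of_lt_of_le hd2 (min_le_right _ _)
      by_contra hcon
      push_neg at hcon
      have : (1:ℝ)/(N+1) ≤ 1/(m+1) := by
        apply one_div_le_one_div_of_le (by positivity)
        have : (m:ℝ) ≤ N := by exact_mod_cast hcon.le
        linarith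
      linarith
    have hfd : dist (f (d m)) (f x) < ε/2 :=
      hδ₁ (lt_of_lt_of_le hd1 (min_le_left _ _))
    have he1 : dist (e (τ m)) (f (d m)) < ε/2 := by
      have := hN₁ m (le_trans (le_max_left _ _) hmN)
      rwa [Real.dist_eq, sub_zero, abs_of_nonneg dist_nonneg] at this
    have he2 : dist ((1:ℝ)/(τ m + 1)) (0:ℝ) < ε := hN₂ m (le_trans (le_max_right _ _) hmN)
    show dist (e (τ m)) (f x) ⊔ dist ((1:ℝ)/(τ m + 1)) (0:ℝ) < ε
    apply max_lt
    · calc dist (e (τ m)) (f x) ≤ dist (e (τ m)) (f (d m)) + dist (f (d m)) (f x) :=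
          dist_triangle _ _ _
        _ < ε/2 + ε/2 := add_lt_add he1 hfd
        _ = ε := add_halves ε
    · exact he2

end Glue

section SB

lemma exists_injective_mem (M : ℕ → Set ℕ) (hM : ∀ n, (M n).Infinite) :
    ∃ u : ℕ → ℕ, Function.Injective u ∧ ∀ n, u n ∈ M n := by
  have pick : ∀ (n : ℕ) (s : Finset ℕ), ∃ k, k ∈ M n \ ↑s :=
    fun n s => ((hM n).diff s.finite_toSet).nonempty
  choose p hp using pick
  let s : ℕ → Finset ℕ := fun n => Nat.rec ∅ (fun m t => insert (p m t) t) n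
  have hs_succ : ∀ m, s (m+1) = insert (p m (s m)) (s m) := fun m => rfl
  have hsub : ∀ m n, m ≤ n → s m ⊆ s n := by
    intro m n hmn
    induction n with
    | zero => simp_all
    | succ k ih =>
      rcases Nat.lt_or_ge m (k+1) with hlt | hge
      · exact (ih (Nat.lt_succ_iff.mp hlt)).trans (by rw [hs_succ]; exact Finset.subset_insert _ _)
      · have : m = k+1 := le_antisymm hmn hge
        subst this; rfl
  have hmem : ∀ m n, m < n → p m (s m) ∈ s n := by
    intro m n hmn
    apply hsub (m+1) n hmn
    rw [hs_succ]
    exact Finset.mem_insert_self _ _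
  refine ⟨fun n => p n (s n), ?_, fun n => (hp n (s n)).1⟩
  intro a b hab
  have hab' : p a (s a) = p b (s b) := hab
  by_contra hne
  rcases lt_or_gt_of_ne hne with hlt | hgt
  · exact (hp b (s b)).2 (by rw [← hab']; exact_mod_cast hmem a b hlt)
  · exact (hp a (s a)).2 (by rw [hab']; exact_mod_cast hmem b a hgt)

lemma schroeder_bernstein_or {u v : ℕ → ℕ} (hu : Function.Injective u)
    (hv : Function.Injective v) :
    ∃ τ : Equiv.Perm ℕ, ∀ n, τ n = u n ∨ v (τ n) = n := by
  classical
  set w : ℕ → ℕ := fun n => v (u n) with hw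
  set A : Set ℕ := ⋃ k, w^[k] '' (Set.range v)ᶜ with hA
  have a1 : (Set.range v)ᶜ ⊆ A := by
    intro n hn
    exact Set.mem_iUnion.mpr ⟨0, by simpa using hn⟩
  have a2 : ∀ n ∈ A, w n ∈ A := by
    intro n hn
    obtain ⟨k, m, hm, rfl⟩ := by simpa only [hA, Set.mem_iUnion, Set.mem_image] using hn
    exact Set.mem_iUnion.mpr ⟨k+1, ⟨m, hm, by rw [Function.iterate_succ_apply']⟩⟩
  have a3 : ∀ n, n ∉ A → n ∈ Set.range v := fun n hn => by
    by_contra hc; exact hn (a1 hc)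
  set t : ℕ → ℕ := fun n => if n ∈ A then u n else Function.invFun v n with ht
  have hprop : ∀ n, (n ∈ A ∧ t n = u n) ∨ (n ∉ A ∧ v (t n) = n) := by
    intro n
    by_cases hn : n ∈ A
    · exact Or.inl ⟨hn, if_pos hn⟩
    · refine Or.inr ⟨hn, ?_⟩
      rw [ht]; simp only [if_neg hn]
      exact Function.invFun_eq (a3 n hn)
  have hinj : Function.Injective t := by
    intro a b hab
    rcases hprop a with ⟨ha, hta⟩ | ⟨ha, hta⟩ <;> rcases hprop b with ⟨hb, htb⟩ | ⟨hb, htb⟩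
    · rw [hta, htb] at hab; exact hu hab
    · exfalso; apply hb; rw [← hab] at htb; rw [hta] at htb
      rw [← htb]; exact a2 a ha
    · exfalso; apply ha; rw [hab] at hta; rw [htb] at hta
      rw [← hta]; exact a2 b hb
    · rw [← hta, ← htb, hab]
  have hsurj : Function.Surjective t := by
    intro m
    by_cases hvm : v m ∈ A
    · obtain ⟨k, c, hc, hck⟩ := by simpa only [hA, Set.mem_iUnion, Set.mem_image] using hvm
      cases k with
      | zero =>
        simp only [Function.iterate_zero, id_eq] at hck
        exact absurd ⟨m, hck.symm⟩ hc
      | succ k =>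
        rw [Function.iterate_succ_apply'] at hck
        have hwk : w^[k] c ∈ A := Set.mem_iUnion.mpr ⟨k, ⟨c, hc, rfl⟩⟩
        have hm : u (w^[k] c) = m := hv hck
        exact ⟨w^[k] c, by rw [ht]; simp only [if_pos hwk]; exact hm⟩
    · refine ⟨v m, ?_⟩
      rw [ht]; simp only [if_neg hvm]
      exact Function.leftInverse_invFun hv m
  refine ⟨Equiv.ofBijective t ⟨hinj, hsurj⟩, fun n => ?_⟩
  rcases hprop n with ⟨_, h⟩ | ⟨_, h⟩
  · exact Or.inl h
  · exact Or.inr h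

end SB

section Conv
variable {X Y : Type*} [MetricSpace X] [MetricSpace Y]

lemma inv_succ_le_inv_succ {m n : ℕ} (h : m ≤ n) : (1:ℝ)/(n+1) ≤ 1/(m+1) := by
  apply one_div_le_one_div_of_le (by positivity)
  have : (m:ℝ) ≤ n := Nat.cast_le.mpr h
  linarith

lemma tendsto_dist_of_choice (d : ℕ → X) (e : ℕ → Y) (f : X → Y) (g : Y → X)
    (hf : UniformContinuous f) (hgf : ∀ y, f (g y) = y) (τ : ℕ → ℕ)
    (hτ : Function.Injective τ)
    (H : ∀ n, dist (e (τ n)) (f (d n)) < 1/(n+1) ∨ dist (d n) (g (e (τ n))) < 1/(τ n + 1)) :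
    Tendsto (fun n => dist (e (τ n)) (f (d n))) atTop (𝓝 0) := by
  rw [Metric.tendsto_atTop]
  intro ε hε
  obtain ⟨δ, hδpos, hδ⟩ := Metric.uniformContinuous_iff.mp hf ε hε
  obtain ⟨N₁, hN₁⟩ := exists_nat_one_div_lt hε
  have hinf : Tendsto (fun m => (1:ℝ)/(τ m + 1)) atTop (𝓝 0) :=
    tendsto_inv_succ_comp (injective_tendsto_atTop hτ)
  obtain ⟨N₂, hN₂⟩ := (Metric.tendsto_atTop.mp hinf) δ hδpos
  refine ⟨max N₁ N₂, fun n hn => ?_⟩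
  rw [Real.dist_eq, sub_zero, abs_of_nonneg dist_nonneg]
  rcases H n with h | h
  · calc dist (e (τ n)) (f (d n)) < 1/(n+1) := h
      _ ≤ 1/(N₁+1) := inv_succ_le_inv_succ (le_trans (le_max_left _ _) hn)
      _ < ε := hN₁
  · have h1 : dist ((1:ℝ)/(τ n + 1)) 0 < δ := hN₂ n (le_trans (le_max_right _ _) hn)
    rw [Real.dist_eq, sub_zero, abs_of_nonneg (inv_succ_pos _).le] at h1
    have h2 := hδ (h.trans h1)
    rw [hgf] at h2
    rw [dist_comm]
    exact h2

lemma image_fiber_fst {A B : Type*} (g : A → B) (hg : Function.Surjective g) (a : A) :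
    (fun p : A × A × A => (g p.1, g p.2.1, g p.2.2)) '' {p | p.1 = a} = {q | q.1 = g a} := by
  ext ⟨q1, q2, q3⟩
  simp only [Set.mem_image, Set.mem_setOf_eq]
  constructor
  · rintro ⟨⟨p1, p2, p3⟩, hp, heq⟩
    have h1 := congrArg Prod.fst heq
    simp only at h1 hp
    rw [← h1, hp]
  · intro hq
    obtain ⟨p2, hp2⟩ := hg q2
    obtain ⟨p3, hp3⟩ := hg q3
    exact ⟨(a, p2, p3), rfl, by simp only [hq, hp2, hp3]⟩

lemma image_fiber_snd {A B : Type*} (g : A → B) (hg : Function.Surjective g) (a : A) :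
    (fun p : A × A × A => (g p.1, g p.2.1, g p.2.2)) '' {p | p.2.1 = a} = {q | q.2.1 = g a} := by
  ext ⟨q1, q2, q3⟩
  simp only [Set.mem_image, Set.mem_setOf_eq]
  constructor
  · rintro ⟨⟨p1, p2, p3⟩, hp, heq⟩
    have h1 := congrArg (fun r : B × B × B => r.2.1) heq
    simp only at h1 hp
    rw [← h1, hp]
  · intro hq
    obtain ⟨p1, hp1⟩ := hg q1
    obtain ⟨p3, hp3⟩ := hg q3
    exact ⟨(p1, a, p3), rfl, by simp only [hq, hp1, hp3]⟩

lemma image_fiber_trd {A B : Type*} (g : A → B) (hg : Function.Surjective g) (a : A) :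
    (fun p : A × A × A => (g p.1, g p.2.1, g p.2.2)) '' {p | p.2.2 = a} = {q | q.2.2 = g a} := by
  ext ⟨q1, q2, q3⟩
  simp only [Set.mem_image, Set.mem_setOf_eq]
  constructor
  · rintro ⟨⟨p1, p2, p3⟩, hp, heq⟩
    have h1 := congrArg (fun r : B × B × B => r.2.2) heq
    simp only at h1 hp
    rw [← h1, hp]
  · intro hq
    obtain ⟨p1, hp1⟩ := hg q1
    obtain ⟨p2, hp2⟩ := hg q2
    exact ⟨(p1, p2, a), rfl, by simp only [hq, hp1, hp2]⟩

lemma key_lemma {d : ℕ → X} {e : ℕ → Y} (hd : Admissible Set.univ d)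
    (h : (↥(Itilde d) × ↥(Itilde d) × ↥(Itilde d)) ≃ₜ (↥(Itilde e) × ↥(Itilde e) × ↥(Itilde e)))
    (τ : ℕ → ℕ) (hτ : Function.Injective τ)
    (h1 : ∀ n p q, (h (atilde d n, p, q)).1 = atilde e (τ n))
    (h2 : ∀ n p q, (h (p, atilde d n, q)).2.1 = atilde e (τ n))
    (h3 : ∀ n p q, (h (p, q, atilde d n)).2.2 = atilde e (τ n)) :
    ∃ F : X → Y, Continuous F ∧ ∀ x p q,
      (h (embI d x, p, q)).1 = embI e (F x) ∧
      (h (p, embI d x, q)).2.1 = embI e (F x) ∧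
      (h (p, q, embI d x)).2.2 = embI e (F x) := by
  refine ⟨fun x => ((h (embI d x, embI d x, embI d x)).1 : Y × ℝ).1, ?_, ?_⟩
  · have c1 : Continuous (fun x : X =>
        ((embI d x, embI d x, embI d x) : ↥(Itilde d) × ↥(Itilde d) × ↥(Itilde d))) :=
      continuous_embI.prodMk (continuous_embI.prodMk continuous_embI)
    exact continuous_fst.comp (continuous_subtype_val.comp
      (continuous_fst.comp (h.continuous.comp c1)))
  intro x
  obtain ⟨n, hn1, hn2⟩ := exists_approach hd x
  have htend : Tendsto (fun k => atilde d (n k)) atTop (𝓝 (embI d x)) :=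
    tendsto_atilde_of_approach x hn1 hn2
  have hτtend : Tendsto (fun k => (1:ℝ)/(τ (n k) + 1)) atTop (𝓝 0) :=
    tendsto_inv_succ_comp ((injective_tendsto_atTop hτ).comp
      (tendsto_atTop_mono (fun k => (hn1 k).le) tendsto_id))
  have lim1 : ∀ p q, Tendsto (fun k => atilde e (τ (n k))) atTop
      (𝓝 ((h (embI d x, p, q)).1)) := by
    intro p q
    have t0 : Tendsto (fun k => h (atilde d (n k), p, q)) atTop (𝓝 (h (embI d x, p, q))) :=
      (h.continuous.tendsto _).comp (htend.prodMk_nhds tendsto_const_nhds)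
    have t1 := (continuous_fst.tendsto _).comp t0
    simp only [Function.comp_def, h1] at t1
    exact t1
  have lim2 : ∀ p q, Tendsto (fun k => atilde e (τ (n k))) atTop
      (𝓝 ((h (p, embI d x, q)).2.1)) := by
    intro p q
    have t0 : Tendsto (fun k => h (p, atilde d (n k), q)) atTop (𝓝 (h (p, embI d x, q))) :=
      (h.continuous.tendsto _).comp
        (tendsto_const_nhds.prodMk_nhds (htend.prodMk_nhds tendsto_const_nhds))
    have t1 := ((continuous_fst.comp continuous_snd).tendsto _).comp t0
    simp only [Function.comp_def, h2] at t1
    exact t1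
  have lim3 : ∀ p q, Tendsto (fun k => atilde e (τ (n k))) atTop
      (𝓝 ((h (p, q, embI d x)).2.2)) := by
    intro p q
    have t0 : Tendsto (fun k => h (p, q, atilde d (n k))) atTop (𝓝 (h (p, q, embI d x))) :=
      (h.continuous.tendsto _).comp
        (tendsto_const_nhds.prodMk_nhds (tendsto_const_nhds.prodMk_nhds htend))
    have t1 := ((continuous_snd.comp continuous_snd).tendsto _).comp t0
    simp only [Function.comp_def, h3] at t1
    exact t1
  have hLlim : Tendsto (fun k => atilde e (τ (n k))) atTop
      (𝓝 ((h (embI d x, embI d x, embI d x)).1)) := lim1 (embI d x) (embI d x)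
  have hL2 : (((h (embI d x, embI d x, embI d x)).1 : ↥(Itilde e)) : Y × ℝ).2 = 0 := by
    have hval : Tendsto (fun k => ((atilde e (τ (n k)) : ↥(Itilde e)) : Y × ℝ)) atTop
        (𝓝 (((h (embI d x, embI d x, embI d x)).1 : ↥(Itilde e)) : Y × ℝ)) :=
      tendsto_subtype_rng.mp hLlim
    have hsnd : Tendsto (fun k => (1:ℝ)/(τ (n k) + 1)) atTop
        (𝓝 ((((h (embI d x, embI d x, embI d x)).1 : ↥(Itilde e)) : Y × ℝ)).2) :=
      (continuous_snd.tendsto _).comp hval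
    exact tendsto_nhds_unique hsnd hτtend
  have hLe : (h (embI d x, embI d x, embI d x)).1 =
      embI e (((h (embI d x, embI d x, embI d x)).1 : Y × ℝ).1) := by
    apply Subtype.ext
    exact Prod.ext rfl hL2
  intro p q
  refine ⟨?_, ?_, ?_⟩
  · exact (tendsto_nhds_unique hLlim (lim1 p q)).symm.trans hLe
  · exact (tendsto_nhds_unique hLlim (lim2 p q)).symm.trans hLe
  · exact (tendsto_nhds_unique hLlim (lim3 p q)).symm.trans hLe

end Conv

/-- with `X̃ = I_d(X,X)`, `Ỹ = I_e(Y,Y)` and the sets `B_n, C_n, D_n ⊆ X̃³` and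
`H_m, I_m, J_m ⊆ Ỹ³` as above, there is a homeomorphism `f : X → Y` with `(f×f×f)(R) = S`
iff there are a homeomorphism `h : X̃³ → Ỹ³` and a permutation `τ` with `h(R) = S` and
`h(B_n) = H_{τ(n)}`, `h(C_n) = I_{τ(n)}`, `h(D_n) = J_{τ(n)}` for all `n`. -/
theorem homeomorph_with_relation_iff_triple_homeomorph
    {X Y : Type*} [MetricSpace X] [CompactSpace X] [MetricSpace Y] [CompactSpace Y]
    {R : Set (X × X × X)} {S : Set (Y × Y × Y)} (hR : IsClosed R) (hS : IsClosed S)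
    {d : ℕ → X} {e : ℕ → Y}
    (hd : Admissible Set.univ d) (he : Admissible Set.univ e) :
    (∃ f : X ≃ₜ Y, (fun p : X × X × X => (f p.1, f p.2.1, f p.2.2)) '' R = S) ↔
    (∃ h : ↥(Itilde d) × ↥(Itilde d) × ↥(Itilde d) ≃ₜ
            ↥(Itilde e) × ↥(Itilde e) × ↥(Itilde e), ∃ τ : Equiv.Perm ℕ,
      h '' ((fun p : X × X × X => (embI d p.1, embI d p.2.1, embI d p.2.2)) '' R) =
        (fun p : Y × Y × Y => (embI e p.1, embI e p.2.1, embI e p.2.2)) '' S ∧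
      ∀ n : ℕ,
        h '' {p | p.1 = atilde d n} = {q | q.1 = atilde e (τ n)} ∧
        h '' {p | p.2.1 = atilde d n} = {q | q.2.1 = atilde e (τ n)} ∧
        h '' {p | p.2.2 = atilde d n} = {q | q.2.2 = atilde e (τ n)}) := by
  constructor
  · -- forward direction
    rintro ⟨f, hfR⟩
    have hfu : UniformContinuous ⇑f := CompactSpace.uniformContinuous_of_continuous f.continuous
    have hgu : UniformContinuous ⇑f.symm :=
      CompactSpace.uniformContinuous_of_continuous f.symm.continuous
    have hMu : ∀ n, {m | dist (e m) (f (d n)) < 1/(n+1)}.Infinite := by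
      intro n
      have hy : (f (d n) : Y) ∈ closure (Set.range e) := he.2.1 (Set.mem_univ _)
      obtain ⟨b, ⟨m₀, rfl⟩, hb⟩ := Metric.mem_closure_iff.mp hy _ (inv_succ_pos n)
      apply (he.2.2 m₀).mono
      intro j hj
      simp only [Set.mem_setOf_eq] at hj ⊢
      rw [hj, dist_comm]
      exact hb
    have hMv : ∀ m, {k | dist (d k) (f.symm (e m)) < 1/(m+1)}.Infinite := by
      intro m
      have hy : (f.symm (e m) : X) ∈ closure (Set.range d) := hd.2.1 (Set.mem_univ _)
      obtain ⟨b, ⟨k₀, rfl⟩, hb⟩ := Metric.mem_closure_iff.mp hy _ (inv_succ_pos m)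
      apply (hd.2.2 k₀).mono
      intro j hj
      simp only [Set.mem_setOf_eq] at hj ⊢
      rw [hj, dist_comm]
      exact hb
    obtain ⟨u, huinj, hu⟩ := exists_injective_mem _ hMu
    obtain ⟨v, hvinj, hv⟩ := exists_injective_mem _ hMv
    obtain ⟨τ, hτor⟩ := schroeder_bernstein_or huinj hvinj
    have hc : Tendsto (fun n => dist (e (τ n)) (f (d n))) atTop (𝓝 0) := by
      apply tendsto_dist_of_choice d e ⇑f ⇑f.symm hfu f.apply_symm_apply τ τ.injective
      intro n
      rcases hτor n with h | h
      · exact Or.inl (by rw [h]; exact hu n)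
      · refine Or.inr ?_
        have := hv (τ n)
        rw [h] at this
        exact this
    have hc' : Tendsto (fun m => dist (d (τ.symm m)) (f.symm (e m))) atTop (𝓝 0) := by
      apply tendsto_dist_of_choice e d ⇑f.symm ⇑f hgu f.symm_apply_apply ⇑τ.symm
        τ.symm.injective
      intro m
      rcases hτor (τ.symm m) with h | h
      · refine Or.inr ?_
        have h' : m = u (τ.symm m) := by rw [← h]; simp
        have := hu (τ.symm m)
        rw [← h'] at this
        exact this
      · refine Or.inl ?_
        have h' : v m = τ.symm m := by
          rw [← h]
          simp
        have := hv m
        rw [h'] at this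
        exact this
    let G : ↥(Itilde d) ≃ₜ ↥(Itilde e) :=
      { toFun := glue d e ⇑f τ
        invFun := glue e d ⇑f.symm ⇑τ.symm
        left_inv := by
          intro p
          rcases cases_Itilde p with ⟨x, rfl⟩ | ⟨n, rfl⟩
          · rw [glue_embI, glue_embI, f.symm_apply_apply]
          · rw [glue_atilde, glue_atilde, Equiv.symm_apply_apply]
        right_inv := by
          intro p
          rcases cases_Itilde p with ⟨y, rfl⟩ | ⟨m, rfl⟩
          · rw [glue_embI, glue_embI, f.apply_symm_apply]
          · rw [glue_atilde, glue_atilde, Equiv.apply_symm_apply]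
        continuous_toFun := glue_continuous d e ⇑f hfu ⇑τ τ.injective hc
        continuous_invFun := glue_continuous e d ⇑f.symm hgu ⇑τ.symm τ.symm.injective hc' }
    have hGe : ∀ x, G (embI d x) = embI e (f x) := fun x => glue_embI d e ⇑f ⇑τ x
    have hGa : ∀ n, G (atilde d n) = atilde e (τ n) := fun n => glue_atilde d e ⇑f ⇑τ n
    refine ⟨G.prodCongr (G.prodCongr G), τ, ?_, ?_⟩
    · have hcoe : ⇑(G.prodCongr (G.prodCongr G)) =
          (fun p : ↥(Itilde d) × ↥(Itilde d) × ↥(Itilde d) => (G p.1, G p.2.1, G p.2.2)) := rfl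
      rw [hcoe, Set.image_image]
      have heq : (fun p : X × X × X =>
            ((G (embI d p.1), G (embI d p.2.1), G (embI d p.2.2)) :
              ↥(Itilde e) × ↥(Itilde e) × ↥(Itilde e))) =
          (fun p : X × X × X => (embI e (f p.1), embI e (f p.2.1), embI e (f p.2.2))) := by
        funext p
        rw [hGe, hGe, hGe]
      show (fun p : X × X × X => (G (embI d p.1), G (embI d p.2.1), G (embI d p.2.2))) '' R =
        (fun p : Y × Y × Y => (embI e p.1, embI e p.2.1, embI e p.2.2)) '' S
      rw [heq, ← hfR, Set.image_image]
    · intro n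
      have hcoe : ⇑(G.prodCongr (G.prodCongr G)) =
          (fun p : ↥(Itilde d) × ↥(Itilde d) × ↥(Itilde d) => (G p.1, G p.2.1, G p.2.2)) := rfl
      refine ⟨?_, ?_, ?_⟩
      · rw [hcoe, image_fiber_fst ⇑G G.surjective, hGa]
      · rw [hcoe, image_fiber_snd ⇑G G.surjective, hGa]
      · rw [hcoe, image_fiber_trd ⇑G G.surjective, hGa]
  · -- backward direction
    rintro ⟨h, τ, hRS, hfib⟩
    have h1 : ∀ n p q, (h (atilde d n, p, q)).1 = atilde e (τ n) := by
      intro n p q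
      have hmem : ((atilde d n, p, q) :
          ↥(Itilde d) × ↥(Itilde d) × ↥(Itilde d)) ∈ {p' | p'.1 = atilde d n} := rfl
      have := Set.mem_image_of_mem ⇑h hmem
      rw [(hfib n).1] at this
      exact this
    have h2 : ∀ n p q, (h (p, atilde d n, q)).2.1 = atilde e (τ n) := by
      intro n p q
      have hmem : ((p, atilde d n, q) :
          ↥(Itilde d) × ↥(Itilde d) × ↥(Itilde d)) ∈ {p' | p'.2.1 = atilde d n} := rfl
      have := Set.mem_image_of_mem ⇑h hmem
      rw [(hfib n).2.1] at this
      exact this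
    have h3 : ∀ n p q, (h (p, q, atilde d n)).2.2 = atilde e (τ n) := by
      intro n p q
      have hmem : ((p, q, atilde d n) :
          ↥(Itilde d) × ↥(Itilde d) × ↥(Itilde d)) ∈ {p' | p'.2.2 = atilde d n} := rfl
      have := Set.mem_image_of_mem ⇑h hmem
      rw [(hfib n).2.2] at this
      exact this
    have hsymm_img : ∀ (A : Set (↥(Itilde d) × ↥(Itilde d) × ↥(Itilde d)))
        (B : Set (↥(Itilde e) × ↥(Itilde e) × ↥(Itilde e))),
        ⇑h '' A = B → ⇑h.symm '' B = A := by
      intro A B hAB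
      rw [← hAB, Set.image_image]
      simp only [Homeomorph.symm_apply_apply, Set.image_id']
    have h1s : ∀ m p q, (h.symm (atilde e m, p, q)).1 = atilde d (τ.symm m) := by
      intro m p q
      have himg := hsymm_img _ _ (hfib (τ.symm m)).1
      rw [Equiv.apply_symm_apply] at himg
      have hmem : ((atilde e m, p, q) :
          ↥(Itilde e) × ↥(Itilde e) × ↥(Itilde e)) ∈ {q' | q'.1 = atilde e m} := rfl
      have := Set.mem_image_of_mem ⇑h.symm hmem
      rw [himg] at this
      exact this
    have h2s : ∀ m p q, (h.symm (p, atilde e m, q)).2.1 = atilde d (τ.symm m) := by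
      intro m p q
      have himg := hsymm_img _ _ (hfib (τ.symm m)).2.1
      rw [Equiv.apply_symm_apply] at himg
      have hmem : ((p, atilde e m, q) :
          ↥(Itilde e) × ↥(Itilde e) × ↥(Itilde e)) ∈ {q' | q'.2.1 = atilde e m} := rfl
      have := Set.mem_image_of_mem ⇑h.symm hmem
      rw [himg] at this
      exact this
    have h3s : ∀ m p q, (h.symm (p, q, atilde e m)).2.2 = atilde d (τ.symm m) := by
      intro m p q
      have himg := hsymm_img _ _ (hfib (τ.symm m)).2.2
      rw [Equiv.apply_symm_apply] at himg
      have hmem : ((p, q, atilde e m) :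
          ↥(Itilde e) × ↥(Itilde e) × ↥(Itilde e)) ∈ {q' | q'.2.2 = atilde e m} := rfl
      have := Set.mem_image_of_mem ⇑h.symm hmem
      rw [himg] at this
      exact this
    obtain ⟨F, contF, keyF⟩ := key_lemma hd h ⇑τ τ.injective h1 h2 h3
    obtain ⟨G, contG, keyG⟩ := key_lemma he h.symm ⇑τ.symm τ.symm.injective h1s h2s h3s
    have hhF : ∀ x, h (embI d x, embI d x, embI d x) =
        (embI e (F x), embI e (F x), embI e (F x)) := by
      intro x
      obtain ⟨k1, k2, k3⟩ := keyF x (embI d x) (embI d x)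
      exact Prod.ext k1 (Prod.ext k2 k3)
    have hhG : ∀ y, h.symm (embI e y, embI e y, embI e y) =
        (embI d (G y), embI d (G y), embI d (G y)) := by
      intro y
      obtain ⟨k1, k2, k3⟩ := keyG y (embI e y) (embI e y)
      exact Prod.ext k1 (Prod.ext k2 k3)
    have hGF : ∀ x, G (F x) = x := by
      intro x
      have e1 := hhG (F x)
      rw [← hhF x, Homeomorph.symm_apply_apply] at e1
      exact (embI_injective (congrArg Prod.fst e1)).symm
    have hFG : ∀ y, F (G y) = y := by
      intro y
      have e1 := hhF (G y)
      rw [← hhG y, Homeomorph.apply_symm_apply] at e1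
      exact (embI_injective (congrArg Prod.fst e1)).symm
    refine ⟨{ toFun := F, invFun := G, left_inv := hGF, right_inv := hFG,
              continuous_toFun := contF, continuous_invFun := contG }, ?_⟩
    show (fun p : X × X × X => (F p.1, F p.2.1, F p.2.2)) '' R = S
    have hcomm : ∀ p : X × X × X,
        h (embI d p.1, embI d p.2.1, embI d p.2.2) =
          (embI e (F p.1), embI e (F p.2.1), embI e (F p.2.2)) := fun p =>
      Prod.ext (keyF p.1 _ _).1 (Prod.ext (keyF p.2.1 _ _).2.1 (keyF p.2.2 _ _).2.2)
    have hEe : Function.Injective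
        (fun q : Y × Y × Y => ((embI e q.1, embI e q.2.1, embI e q.2.2) :
          ↥(Itilde e) × ↥(Itilde e) × ↥(Itilde e))) := by
      rintro ⟨a1, a2, a3⟩ ⟨b1, b2, b3⟩ hab
      simp only [Prod.mk.injEq] at hab ⊢
      exact ⟨embI_injective hab.1, embI_injective hab.2.1, embI_injective hab.2.2⟩
    apply hEe.image_injective
    calc (fun q : Y × Y × Y => ((embI e q.1, embI e q.2.1, embI e q.2.2) :
            ↥(Itilde e) × ↥(Itilde e) × ↥(Itilde e))) ''
          ((fun p : X × X × X => (F p.1, F p.2.1, F p.2.2)) '' R)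
        = (fun p : X × X × X =>
            ((embI e (F p.1), embI e (F p.2.1), embI e (F p.2.2)) :
              ↥(Itilde e) × ↥(Itilde e) × ↥(Itilde e))) '' R := Set.image_image _ _ _
      _ = (fun p : X × X × X => h (embI d p.1, embI d p.2.1, embI d p.2.2)) '' R := by
          rw [funext hcomm]
      _ = ⇑h '' ((fun p : X × X × X => (embI d p.1, embI d p.2.1, embI d p.2.2)) '' R) :=
          (Set.image_image _ _ _).symm
      _ = (fun p : Y × Y × Y => (embI e p.1, embI e p.2.1, embI e p.2.2)) '' S := hRS
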